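/- Submultiplicativity-based spectral comparison: let H = D (Pᵀ ⊗ M + Qᵀ ⊗ N) where D = diag((A⊗A), …, (A⊗A)^s), P, Q are s×s entrywise-nonnegative matrices, and M, N ∈ ℂ^{n²×n²} arise as M = B̄ ⊗ B, N = Ē ⊗ E for matrices B, E ∈ ℂ^{n×n}. Define the scalar comparison matrix Φ = (‖B‖² P + ‖E‖² Q) diag(‖A‖², ‖A²‖², …, ‖A^s‖²). If ρ(Φ) < 1, then ρ(H) < 1. -/

import Mathlib

open Matrix
open scoped Kronecker Matrix.Norms.L2Operator ENNReal NNReal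

set_option linter.unusedSectionVars false
set_option maxHeartbeats 1600000

noncomputable section SpectralComparisonHelpers

variable {ι κ : Type*} [Fintype ι] [Fintype κ] [DecidableEq ι] [DecidableEq κ]

/-- Euclidean norm of a plain vector. -/
def eN (y : ι → ℂ) : ℝ := ‖(EuclideanSpace.equiv ι ℂ).symm y‖

lemma eN_eq (y : ι → ℂ) : eN y = Real.sqrt (∑ i, ‖y i‖ ^ 2) := by
  rw [eN, EuclideanSpace.norm_eq]; rfl

lemma eN_nonneg (y : ι → ℂ) : 0 ≤ eN y := norm_nonneg _

lemma eN_sq (y : ι → ℂ) : eN y ^ 2 = ∑ i, ‖y i‖ ^ 2 := by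
  rw [eN_eq, Real.sq_sqrt]; positivity

lemma mulVec_eN_le (M : Matrix ι κ ℂ) (x : κ → ℂ) : eN (M *ᵥ x) ≤ ‖M‖ * eN x := by
  simpa [eN] using M.l2_opNorm_mulVec ((EuclideanSpace.equiv κ ℂ).symm x)

lemma opNorm_le_of (M : Matrix ι κ ℂ) {c : ℝ} (hc : 0 ≤ c)
    (h : ∀ x : κ → ℂ, eN (M *ᵥ x) ≤ c * eN x) : ‖M‖ ≤ c := by
  rw [Matrix.l2_opNorm_def]
  refine ContinuousLinearMap.opNorm_le_bound _ hc fun x => ?_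
  simpa [eN, Matrix.toEuclideanLin_apply] using h ((WithLp.equiv 2 (κ → ℂ)) x)

lemma apply_le_eN (y : ι → ℂ) (i : ι) : ‖y i‖ ≤ eN y := by
  rw [eN_eq, show ‖y i‖ = Real.sqrt (‖y i‖^2) by rw [Real.sqrt_sq (norm_nonneg _)]]
  exact Real.sqrt_le_sqrt (Finset.single_le_sum (f := fun j => ‖y j‖^2)
    (fun j _ => by positivity) (Finset.mem_univ i))

lemma entry_le_opNorm (M : Matrix ι κ ℂ) (i : ι) (j : κ) : ‖M i j‖ ≤ ‖M‖ := by
  have h1 : ‖(M *ᵥ Pi.single j 1) i‖ ≤ eN (M *ᵥ Pi.single j 1) := apply_le_eN _ i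
  have h2 : eN (M *ᵥ Pi.single j 1) ≤ ‖M‖ * eN (Pi.single j (1:ℂ)) := mulVec_eN_le _ _
  have h3 : eN (Pi.single j (1:ℂ)) = 1 := by
    rw [eN_eq, Finset.sum_eq_single (M := ℝ) j (fun b _ hb => by simp [Pi.single_apply, hb])
      (by simp)]
    simp
  have h4 : (M *ᵥ Pi.single j 1) i = M i j := by simp [mulVec_single]
  rw [h4] at h1
  calc ‖M i j‖ ≤ _ := h1
    _ ≤ ‖M‖ * 1 := by rw [← h3]; exact h2
    _ = ‖M‖ := mul_one _

lemma eN_le_of_sq_le_sq {y : ι → ℂ} {c : ℝ} (hc : 0 ≤ c) (h : eN y ^ 2 ≤ c ^ 2) : eN y ≤ c := by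
  nlinarith [eN_nonneg y]

lemma eN_smul (c : ℂ) (y : ι → ℂ) : eN (fun i => c * y i) = ‖c‖ * eN y := by
  rw [eN_eq, eN_eq]
  simp only [norm_mul, mul_pow, ← Finset.mul_sum]
  rw [Real.sqrt_mul (by positivity), Real.sqrt_sq (norm_nonneg c)]

lemma eN_sum_le {σ : Type*} [Fintype σ] (y : σ → ι → ℂ) :
    eN (∑ j, y j) ≤ ∑ j, eN (y j) := by
  unfold eN
  rw [map_sum ((EuclideanSpace.equiv ι ℂ).symm) y Finset.univ]
  exact norm_sum_le _ _

variable {n₀ : Type*} [Fintype n₀] [DecidableEq n₀]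

lemma kron_pow (A : Matrix n₀ n₀ ℂ) (k : ℕ) : (A ⊗ₖ A) ^ k = (A ^ k) ⊗ₖ (A ^ k) := by
  induction k with
  | zero => simp [Matrix.one_kronecker_one]
  | succ k ih => rw [pow_succ, ih, pow_succ, ← Matrix.mul_kronecker_mul]

lemma kron_one_norm_le (X : Matrix n₀ n₀ ℂ) :
    ‖X ⊗ₖ (1 : Matrix n₀ n₀ ℂ)‖ ≤ ‖X‖ := by
  refine opNorm_le_of _ (norm_nonneg X) fun v => ?_
  refine eN_le_of_sq_le_sq (mul_nonneg (norm_nonneg _) (eN_nonneg v)) ?_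
  rw [eN_sq, mul_pow, eN_sq]
  have hrw : ∀ p : n₀ × n₀, ((X ⊗ₖ (1 : Matrix n₀ n₀ ℂ)) *ᵥ v) p
      = (X *ᵥ fun c => v (c, p.2)) p.1 := by
    rintro ⟨a, b⟩
    simp only [mulVec, dotProduct, Fintype.sum_prod_type, kroneckerMap_apply, one_apply,
      mul_ite, mul_one, mul_zero, ite_mul, zero_mul, Finset.sum_ite_eq, Finset.mem_univ, if_true]
  calc ∑ p : n₀ × n₀, ‖((X ⊗ₖ (1 : Matrix n₀ n₀ ℂ)) *ᵥ v) p‖ ^ 2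
      = ∑ b : n₀, ∑ a : n₀, ‖(X *ᵥ fun c => v (c, b)) a‖ ^ 2 := by
        rw [Fintype.sum_prod_type, Finset.sum_comm]
        exact Finset.sum_congr rfl fun b _ => Finset.sum_congr rfl fun a _ => by rw [hrw (a, b)]
    _ ≤ ∑ b : n₀, ‖X‖^2 * ∑ c : n₀, ‖v (c, b)‖ ^ 2 := by
        refine Finset.sum_le_sum fun b _ => ?_
        have h1 := mulVec_eN_le X (fun c => v (c, b))
        have e1 := eN_sq (X *ᵥ fun c => v (c, b))
        have e2 := eN_sq (fun c => v (c, b))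
        rw [← e1, ← e2]
        nlinarith [eN_nonneg (X *ᵥ fun c => v (c, b)), eN_nonneg (fun c => v (c, b)),
          norm_nonneg X]
    _ = ‖X‖ ^ 2 * ∑ p : n₀ × n₀, ‖v p‖ ^ 2 := by
        rw [← Finset.mul_sum, Fintype.sum_prod_type, Finset.sum_comm]

lemma one_kron_norm_le (Y : Matrix n₀ n₀ ℂ) :
    ‖(1 : Matrix n₀ n₀ ℂ) ⊗ₖ Y‖ ≤ ‖Y‖ := by
  refine opNorm_le_of _ (norm_nonneg Y) fun v => ?_
  refine eN_le_of_sq_le_sq (mul_nonneg (norm_nonneg _) (eN_nonneg v)) ?_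
  rw [eN_sq, mul_pow, eN_sq]
  have hrw : ∀ p : n₀ × n₀, (((1 : Matrix n₀ n₀ ℂ) ⊗ₖ Y) *ᵥ v) p
      = (Y *ᵥ fun d => v (p.1, d)) p.2 := by
    rintro ⟨a, b⟩
    simp only [mulVec, dotProduct, Fintype.sum_prod_type, kroneckerMap_apply, one_apply,
      mul_ite, mul_one, mul_zero, ite_mul, zero_mul, one_mul]
    rw [Finset.sum_comm]
    simp [Finset.sum_ite_eq]
  calc ∑ p : n₀ × n₀, ‖(((1 : Matrix n₀ n₀ ℂ) ⊗ₖ Y) *ᵥ v) p‖ ^ 2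
      = ∑ a : n₀, ∑ b : n₀, ‖(Y *ᵥ fun d => v (a, d)) b‖ ^ 2 := by
        rw [Fintype.sum_prod_type]
        exact Finset.sum_congr rfl fun a _ => Finset.sum_congr rfl fun b _ => by rw [hrw (a, b)]
    _ ≤ ∑ a : n₀, ‖Y‖^2 * ∑ d : n₀, ‖v (a, d)‖ ^ 2 := by
        refine Finset.sum_le_sum fun a _ => ?_
        have h1 := mulVec_eN_le Y (fun d => v (a, d))
        have e1 := eN_sq (Y *ᵥ fun d => v (a, d))
        have e2 := eN_sq (fun d => v (a, d))
        rw [← e1, ← e2]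
        nlinarith [eN_nonneg (Y *ᵥ fun d => v (a, d)), eN_nonneg (fun d => v (a, d)),
          norm_nonneg Y]
    _ = ‖Y‖ ^ 2 * ∑ p : n₀ × n₀, ‖v p‖ ^ 2 := by
        rw [← Finset.mul_sum, Fintype.sum_prod_type]

lemma kron_norm_le (X Y : Matrix n₀ n₀ ℂ) : ‖X ⊗ₖ Y‖ ≤ ‖X‖ * ‖Y‖ := by
  have h : X ⊗ₖ Y = (X ⊗ₖ (1 : Matrix n₀ n₀ ℂ)) * ((1 : Matrix n₀ n₀ ℂ) ⊗ₖ Y) := by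
    rw [← Matrix.mul_kronecker_mul, mul_one, one_mul]
  rw [h]
  calc ‖_ * _‖ ≤ ‖X ⊗ₖ (1 : Matrix n₀ n₀ ℂ)‖ * ‖(1 : Matrix n₀ n₀ ℂ) ⊗ₖ Y‖ :=
        Matrix.l2_opNorm_mul _ _
    _ ≤ ‖X‖ * ‖Y‖ := mul_le_mul (kron_one_norm_le X) (one_kron_norm_le Y)
        (norm_nonneg _) (norm_nonneg _)

lemma conj_norm_le (B : Matrix n₀ n₀ ℂ) : ‖B.map (starRingEnd ℂ)‖ ≤ ‖B‖ := by
  refine opNorm_le_of _ (norm_nonneg B) fun v => ?_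
  have hrw : (B.map (starRingEnd ℂ)) *ᵥ v = fun a => starRingEnd ℂ ((B *ᵥ (star v)) a) := by
    funext a
    simp only [mulVec, dotProduct, map_apply, map_sum, _root_.map_mul, Pi.star_apply,
      RingHom.coe_coe]
    exact Finset.sum_congr rfl fun c _ => by simp [mul_comm]
  rw [hrw]
  have h1 : eN (fun a => starRingEnd ℂ ((B *ᵥ (star v)) a)) = eN (B *ᵥ (star v)) := by
    rw [eN_eq, eN_eq]
    congr 1
    exact Finset.sum_congr rfl fun a _ => by simp
  have h2 : eN (star v) = eN v := by
    rw [eN_eq, eN_eq]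
    congr 1
    exact Finset.sum_congr rfl fun a _ => by simp
  rw [h1, ← h2]
  exact mulVec_eN_le B (star v)

end SpectralComparisonHelpers

/-- Submultiplicativity-based spectral comparison: with
H = diag((A⊗A), …, (A⊗A)^s) (Pᵀ ⊗ (B̄⊗B) + Qᵀ ⊗ (Ē⊗E)) and
Φ = (‖B‖² P + ‖E‖² Q) diag(‖A‖², …, ‖A^s‖²), if ρ(Φ) < 1 then ρ(H) < 1. -/
theorem spectral_comparison {n s : ℕ}
    (A B E : Matrix (Fin n) (Fin n) ℂ)
    (P Q : Matrix (Fin s) (Fin s) ℝ) (hP : ∀ i j, 0 ≤ P i j) (hQ : ∀ i j, 0 ≤ Q i j)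
    (D : Matrix (Fin s × Fin n × Fin n) (Fin s × Fin n × Fin n) ℂ)
    (hD : ∀ p q, D p q = if p.1 = q.1 then ((A ⊗ₖ A) ^ ((p.1 : ℕ) + 1)) p.2 q.2 else 0)
    (H : Matrix (Fin s × Fin n × Fin n) (Fin s × Fin n × Fin n) ℂ)
    (hH : H = D * ((P.map Complex.ofReal)ᵀ ⊗ₖ (B.map (starRingEnd ℂ) ⊗ₖ B)
        + (Q.map Complex.ofReal)ᵀ ⊗ₖ (E.map (starRingEnd ℂ) ⊗ₖ E)))
    (Φ : Matrix (Fin s) (Fin s) ℝ)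
    (hΦ : Φ = (‖B‖ ^ 2 • P + ‖E‖ ^ 2 • Q) *
        Matrix.diagonal (fun i : Fin s => ‖A ^ ((i : ℕ) + 1)‖ ^ 2))
    (hρ : spectralRadius ℂ (Φ.map Complex.ofReal) < 1) :
    spectralRadius ℂ H < 1 := by
  classical
  have hΦentry : ∀ j i : Fin s, Φ j i
      = (‖B‖ ^ 2 * P j i + ‖E‖ ^ 2 * Q j i) * ‖A ^ ((i : ℕ) + 1)‖ ^ 2 := by
    intro j i
    rw [hΦ, Matrix.mul_diagonal]
    simp [Matrix.add_apply, Matrix.smul_apply, smul_eq_mul]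
  have hΦnn : ∀ j i, 0 ≤ Φ j i := by
    intro j i
    rw [hΦentry]
    have h1 : 0 ≤ ‖B‖ ^ 2 * P j i := mul_nonneg (by positivity) (hP j i)
    have h2 : 0 ≤ ‖E‖ ^ 2 * Q j i := mul_nonneg (by positivity) (hQ j i)
    positivity
  set Φc := Φ.map Complex.ofReal with hΦc
  -- Step 1: find a power m with (s : ℝ) * ‖Φc ^ m‖ < 1
  obtain ⟨m, hm1, hmlt⟩ : ∃ m : ℕ, 1 ≤ m ∧ (s : ℝ) * ‖Φc ^ m‖ < 1 := by
    haveI : CompleteSpace (Matrix (Fin s) (Fin s) ℂ) := FiniteDimensional.complete ℂ _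
    obtain ⟨r, hr1, hr2⟩ := exists_between hρ
    have hgel := spectrum.pow_nnnorm_pow_one_div_tendsto_nhds_spectralRadius Φc
    have hev1 : ∀ᶠ m : ℕ in Filter.atTop, (‖Φc ^ m‖₊ : ℝ≥0∞) ^ (1 / (m:ℝ)) < r :=
      hgel.eventually_lt_const hr1
    have hpow : Filter.Tendsto (fun m : ℕ => (s : ℝ≥0∞) * r ^ m) Filter.atTop (nhds 0) := by
      have h0 : Filter.Tendsto (fun m : ℕ => r ^ m) Filter.atTop (nhds 0) :=
        ENNReal.tendsto_pow_atTop_nhds_zero_of_lt_one hr2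
      simpa using ENNReal.Tendsto.const_mul h0 (Or.inr (by simp))
    have hev2 : ∀ᶠ m : ℕ in Filter.atTop, (s : ℝ≥0∞) * r ^ m < 1 :=
      hpow.eventually_lt_const zero_lt_one
    obtain ⟨m, hm1, hm2, hm3⟩ := ((Filter.eventually_ge_atTop 1).and (hev1.and hev2)).exists
    refine ⟨m, hm1, ?_⟩
    have hmne : (m : ℝ) ≠ 0 := Nat.cast_ne_zero.mpr (by omega)
    have hle : (‖Φc ^ m‖₊ : ℝ≥0∞) ≤ r ^ m := by
      have := ENNReal.rpow_le_rpow hm2.le (le_of_lt (by positivity : (0:ℝ) < (m:ℝ)))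
      rw [← ENNReal.rpow_mul, one_div_mul_cancel hmne, ENNReal.rpow_one,
        ENNReal.rpow_natCast] at this
      exact this
    have hfin : (s : ℝ≥0∞) * (‖Φc ^ m‖₊ : ℝ≥0∞) < 1 :=
      lt_of_le_of_lt (mul_le_mul_right hle _) hm3
    have hcoe : ((s * ‖Φc ^ m‖₊ : ℝ≥0) : ℝ≥0∞) < 1 := by
      rw [ENNReal.coe_mul]
      simpa using hfin
    have h : (s * ‖Φc ^ m‖₊ : ℝ≥0) < 1 := by
      rw [← ENNReal.coe_lt_one_iff]; exact hcoe
    calc (s : ℝ) * ‖Φc ^ m‖ = ((s * ‖Φc ^ m‖₊ : ℝ≥0) : ℝ) := by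
          simp [NNReal.coe_mul, coe_nnnorm]
      _ < 1 := by exact_mod_cast h
  set t : ℝ := (s : ℝ) * ‖Φc ^ m‖ with ht
  have htnn : 0 ≤ t := mul_nonneg (Nat.cast_nonneg s) (norm_nonneg _)
  set b : ℝ := t ^ (1 / (m:ℝ)) with hb
  have hbnn : 0 ≤ b := Real.rpow_nonneg htnn _
  have hb1 : b < 1 := Real.rpow_lt_one htnn hmlt (by positivity)
  -- Step 2: every element of the spectrum has norm at most b
  have hmain : ∀ μ ∈ spectrum ℂ H, ‖μ‖ ≤ b := by
    intro μ hμ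
    obtain ⟨v, hv, hHv⟩ : ∃ v : (Fin s × Fin n × Fin n) → ℂ, v ≠ 0 ∧ H *ᵥ v = μ • v := by
      have h1 : ¬IsUnit (algebraMap ℂ (Matrix (Fin s × Fin n × Fin n)
          (Fin s × Fin n × Fin n) ℂ) μ - H) := spectrum.mem_iff.mp hμ
      have h2 : (algebraMap ℂ (Matrix (Fin s × Fin n × Fin n)
          (Fin s × Fin n × Fin n) ℂ) μ - H).det = 0 := by
        by_contra hdet
        exact h1 ((Matrix.isUnit_iff_isUnit_det _).mpr (isUnit_iff_ne_zero.mpr hdet))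
      obtain ⟨v, hv, hvz⟩ := (Matrix.exists_mulVec_eq_zero_iff).mpr h2
      refine ⟨v, hv, ?_⟩
      have h3 := congrArg (fun x => x + H *ᵥ v) hvz
      simp only [Matrix.sub_mulVec, sub_add_cancel, zero_add] at h3
      rw [← h3, Algebra.algebraMap_eq_smul_one, Matrix.smul_mulVec, Matrix.one_mulVec]
    set w : Fin s → ℝ := fun j => eN (fun q => v (j, q)) with hw
    have hwnn : ∀ j, 0 ≤ w j := fun j => eN_nonneg _
    -- block identity
    have hblock : ∀ (i : Fin s) (p : Fin n × Fin n),
        μ * v (i, p) = ∑ j, ((((A ⊗ₖ A) ^ ((i : ℕ) + 1)) *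
          ((P j i : ℂ) • (B.map (starRingEnd ℂ) ⊗ₖ B)
            + (Q j i : ℂ) • (E.map (starRingEnd ℂ) ⊗ₖ E))) *ᵥ (fun q => v (j, q))) p := by
      intro i p
      have h1 : μ * v (i, p) = (H *ᵥ v) (i, p) := by rw [hHv]; simp
      rw [h1, hH, ← Matrix.mulVec_mulVec]
      set K := ((P.map Complex.ofReal)ᵀ ⊗ₖ (B.map (starRingEnd ℂ) ⊗ₖ B)
          + (Q.map Complex.ofReal)ᵀ ⊗ₖ (E.map (starRingEnd ℂ) ⊗ₖ E)) with hK
      have hL : (D *ᵥ (K *ᵥ v)) (i, p)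
          = ∑ r : Fin n × Fin n, ((A ⊗ₖ A) ^ ((i : ℕ) + 1)) p r * (K *ᵥ v) (i, r) := by
        rw [mulVec, dotProduct, Fintype.sum_prod_type]
        rw [Finset.sum_eq_single i (fun l _ hl => ?_) (by simp)]
        · refine Finset.sum_congr rfl fun r _ => by rw [hD]; simp
        · refine Finset.sum_eq_zero fun r _ => ?_
          rw [hD]
          simp [Ne.symm hl]
      rw [hL]
      have hKv : ∀ r, (K *ᵥ v) (i, r) = ∑ j, ∑ q,
          ((P j i : ℂ) * ((B.map (starRingEnd ℂ) ⊗ₖ B)) r q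
            + (Q j i : ℂ) * ((E.map (starRingEnd ℂ) ⊗ₖ E)) r q) * v (j, q) := by
        intro r
        rw [hK, mulVec, dotProduct, Fintype.sum_prod_type]
        refine Finset.sum_congr rfl fun j _ => Finset.sum_congr rfl fun q _ => ?_
        simp [Matrix.add_apply, kroneckerMap_apply, Matrix.transpose_apply, Matrix.map_apply,
          add_mul]
      simp_rw [hKv, Finset.mul_sum]
      rw [Finset.sum_comm]
      refine Finset.sum_congr rfl fun j _ => ?_
      rw [mulVec, dotProduct]
      simp_rw [Matrix.mul_apply, Finset.sum_mul]
      rw [Finset.sum_comm]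
      refine Finset.sum_congr rfl fun r _ => ?_
      refine Finset.sum_congr rfl fun q _ => ?_
      simp only [Matrix.add_apply, Matrix.smul_apply, smul_eq_mul]
      ring
    -- one-step inequality
    have hkey : ∀ i, ‖μ‖ * w i ≤ ∑ j, Φ j i * w j := by
      intro i
      have hM' : ‖B.map (starRingEnd ℂ) ⊗ₖ B‖ ≤ ‖B‖ ^ 2 := by
        calc ‖B.map (starRingEnd ℂ) ⊗ₖ B‖ ≤ ‖B.map (starRingEnd ℂ)‖ * ‖B‖ := kron_norm_le _ _
          _ ≤ ‖B‖ * ‖B‖ := mul_le_mul_of_nonneg_right (conj_norm_le B) (norm_nonneg B)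
          _ = ‖B‖ ^ 2 := (sq ‖B‖).symm
      have hN' : ‖E.map (starRingEnd ℂ) ⊗ₖ E‖ ≤ ‖E‖ ^ 2 := by
        calc ‖E.map (starRingEnd ℂ) ⊗ₖ E‖ ≤ ‖E.map (starRingEnd ℂ)‖ * ‖E‖ := kron_norm_le _ _
          _ ≤ ‖E‖ * ‖E‖ := mul_le_mul_of_nonneg_right (conj_norm_le E) (norm_nonneg E)
          _ = ‖E‖ ^ 2 := (sq ‖E‖).symm
      have hG : ‖(A ⊗ₖ A) ^ ((i : ℕ) + 1)‖ ≤ ‖A ^ ((i : ℕ) + 1)‖ ^ 2 := by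
        rw [kron_pow]
        calc ‖(A ^ ((i : ℕ) + 1)) ⊗ₖ (A ^ ((i : ℕ) + 1))‖
            ≤ ‖A ^ ((i : ℕ) + 1)‖ * ‖A ^ ((i : ℕ) + 1)‖ := kron_norm_le _ _
          _ = ‖A ^ ((i : ℕ) + 1)‖ ^ 2 := (sq _).symm
      have hT : ∀ j, ‖(((A ⊗ₖ A) ^ ((i : ℕ) + 1)) *
          ((P j i : ℂ) • (B.map (starRingEnd ℂ) ⊗ₖ B)
            + (Q j i : ℂ) • (E.map (starRingEnd ℂ) ⊗ₖ E)))‖ ≤ Φ j i := by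
        intro j
        have hS : ‖(P j i : ℂ) • (B.map (starRingEnd ℂ) ⊗ₖ B)
            + (Q j i : ℂ) • (E.map (starRingEnd ℂ) ⊗ₖ E)‖
            ≤ P j i * ‖B‖ ^ 2 + Q j i * ‖E‖ ^ 2 := by
          calc ‖(P j i : ℂ) • (B.map (starRingEnd ℂ) ⊗ₖ B)
              + (Q j i : ℂ) • (E.map (starRingEnd ℂ) ⊗ₖ E)‖
              ≤ ‖(P j i : ℂ) • (B.map (starRingEnd ℂ) ⊗ₖ B)‖
                + ‖(Q j i : ℂ) • (E.map (starRingEnd ℂ) ⊗ₖ E)‖ := norm_add_le _ _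
            _ = P j i * ‖B.map (starRingEnd ℂ) ⊗ₖ B‖
                + Q j i * ‖E.map (starRingEnd ℂ) ⊗ₖ E‖ := by
                rw [norm_smul, norm_smul, Complex.norm_real, Complex.norm_real,
                  Real.norm_eq_abs, Real.norm_eq_abs, abs_of_nonneg (hP j i),
                  abs_of_nonneg (hQ j i)]
            _ ≤ P j i * ‖B‖ ^ 2 + Q j i * ‖E‖ ^ 2 :=
                add_le_add (mul_le_mul_of_nonneg_left hM' (hP j i))
                  (mul_le_mul_of_nonneg_left hN' (hQ j i))
        calc ‖(((A ⊗ₖ A) ^ ((i : ℕ) + 1)) *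
            ((P j i : ℂ) • (B.map (starRingEnd ℂ) ⊗ₖ B)
              + (Q j i : ℂ) • (E.map (starRingEnd ℂ) ⊗ₖ E)))‖
            ≤ ‖(A ⊗ₖ A) ^ ((i : ℕ) + 1)‖ * ‖(P j i : ℂ) • (B.map (starRingEnd ℂ) ⊗ₖ B)
              + (Q j i : ℂ) • (E.map (starRingEnd ℂ) ⊗ₖ E)‖ := Matrix.l2_opNorm_mul _ _
          _ ≤ (‖A ^ ((i : ℕ) + 1)‖ ^ 2) * (P j i * ‖B‖ ^ 2 + Q j i * ‖E‖ ^ 2) := by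
              refine mul_le_mul hG hS (norm_nonneg _) (by positivity)
          _ = Φ j i := by rw [hΦentry]; ring
      have h0 : ‖μ‖ * w i = eN (fun p => μ * v (i, p)) := (eN_smul μ (fun q => v (i, q))).symm
      rw [h0]
      have h1 : (fun p => μ * v (i, p)) = ∑ j, (((A ⊗ₖ A) ^ ((i : ℕ) + 1)) *
          ((P j i : ℂ) • (B.map (starRingEnd ℂ) ⊗ₖ B)
            + (Q j i : ℂ) • (E.map (starRingEnd ℂ) ⊗ₖ E))) *ᵥ (fun q => v (j, q)) := by
        funext p
        rw [hblock i p]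
        exact (Finset.sum_apply _ _ _).symm
      rw [h1]
      calc eN (∑ j, (((A ⊗ₖ A) ^ ((i : ℕ) + 1)) *
          ((P j i : ℂ) • (B.map (starRingEnd ℂ) ⊗ₖ B)
            + (Q j i : ℂ) • (E.map (starRingEnd ℂ) ⊗ₖ E))) *ᵥ (fun q => v (j, q)))
          ≤ ∑ j, eN ((((A ⊗ₖ A) ^ ((i : ℕ) + 1)) *
            ((P j i : ℂ) • (B.map (starRingEnd ℂ) ⊗ₖ B)
              + (Q j i : ℂ) • (E.map (starRingEnd ℂ) ⊗ₖ E))) *ᵥ (fun q => v (j, q))) :=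
            eN_sum_le _
        _ ≤ ∑ j, Φ j i * w j := by
            refine Finset.sum_le_sum fun j _ => ?_
            calc eN _ ≤ ‖(((A ⊗ₖ A) ^ ((i : ℕ) + 1)) *
                ((P j i : ℂ) • (B.map (starRingEnd ℂ) ⊗ₖ B)
                  + (Q j i : ℂ) • (E.map (starRingEnd ℂ) ⊗ₖ E)))‖ * eN (fun q => v (j, q)) :=
                mulVec_eN_le _ _
              _ ≤ Φ j i * w j := mul_le_mul_of_nonneg_right (hT j) (hwnn j)
    -- iterate
    have hind : ∀ (k : ℕ) (i : Fin s), ‖μ‖ ^ k * w i ≤ ((Φᵀ ^ k) *ᵥ w) i := by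
      intro k
      induction k with
      | zero => intro i; simp [Matrix.one_mulVec]
      | succ k ih =>
        intro i
        have h2 : ((Φᵀ ^ (k+1)) *ᵥ w) i = ∑ j, Φ j i * ((Φᵀ ^ k) *ᵥ w) j := by
          rw [pow_succ', ← Matrix.mulVec_mulVec, mulVec, dotProduct]
          exact Finset.sum_congr rfl fun j _ => by rw [Matrix.transpose_apply]
        rw [h2]
        calc ‖μ‖ ^ (k+1) * w i = ‖μ‖ ^ k * (‖μ‖ * w i) := by ring
          _ ≤ ‖μ‖ ^ k * ∑ j, Φ j i * w j :=
              mul_le_mul_of_nonneg_left (hkey i) (by positivity)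
          _ = ∑ j, Φ j i * (‖μ‖ ^ k * w j) := by
              rw [Finset.mul_sum]
              exact Finset.sum_congr rfl fun j _ => by ring
          _ ≤ ∑ j, Φ j i * ((Φᵀ ^ k) *ᵥ w) j :=
              Finset.sum_le_sum fun j _ => mul_le_mul_of_nonneg_left (ih j) (hΦnn j i)
    -- pick maximizing index
    obtain ⟨x0, hx0⟩ := Function.ne_iff.mp hv
    have hwx : 0 < w x0.1 := by
      have h1 : ‖v x0‖ ≤ w x0.1 := by
        have h2 := apply_le_eN (fun q => v (x0.1, q)) x0.2
        simpa using h2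
      have h3 : 0 < ‖v x0‖ := norm_pos_iff.mpr hx0
      linarith
    obtain ⟨i0, _, hi0⟩ := Finset.exists_max_image Finset.univ w ⟨x0.1, Finset.mem_univ _⟩
    have hwi0 : 0 < w i0 := lt_of_lt_of_le hwx (hi0 x0.1 (Finset.mem_univ _))
    -- entry bound
    have hΦc' : Φc ^ m = (Φ ^ m).map Complex.ofReal := by
      rw [hΦc]
      have h := map_pow (Complex.ofRealHom.mapMatrix) Φ m
      simp only [RingHom.mapMatrix_apply] at h
      exact h.symm
    have hentry : ∀ j, (Φ ^ m) j i0 ≤ ‖Φc ^ m‖ := by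
      intro j
      have h1 : ‖(Φc ^ m) j i0‖ ≤ ‖Φc ^ m‖ := entry_le_opNorm _ _ _
      have h2 : (Φ ^ m) j i0 ≤ ‖(Φc ^ m) j i0‖ := by
        rw [hΦc', Matrix.map_apply, Complex.norm_real, Real.norm_eq_abs]
        exact le_abs_self _
      linarith
    have hchain : ‖μ‖ ^ m * w i0 ≤ t * w i0 := by
      calc ‖μ‖ ^ m * w i0 ≤ ((Φᵀ ^ m) *ᵥ w) i0 := hind m i0
        _ = ∑ j, (Φ ^ m) j i0 * w j := by
            rw [mulVec, dotProduct]
            exact Finset.sum_congr rfl fun j _ => by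
              rw [← Matrix.transpose_pow, Matrix.transpose_apply]
        _ ≤ ∑ j : Fin s, ‖Φc ^ m‖ * w i0 :=
            Finset.sum_le_sum fun j _ => mul_le_mul (hentry j) (hi0 j (Finset.mem_univ j))
              (hwnn j) (norm_nonneg _)
        _ = t * w i0 := by
            rw [Finset.sum_const, Finset.card_univ, Fintype.card_fin, nsmul_eq_mul, ht]
            ring
    have hpowle : ‖μ‖ ^ m ≤ t := le_of_mul_le_mul_right hchain hwi0
    calc ‖μ‖ = (‖μ‖ ^ m) ^ (1 / (m:ℝ)) := by
          rw [← Real.rpow_natCast ‖μ‖ m, ← Real.rpow_mul (norm_nonneg μ),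
            mul_one_div_cancel (Nat.cast_ne_zero.mpr (by omega) : (m:ℝ) ≠ 0), Real.rpow_one]
      _ ≤ t ^ (1 / (m:ℝ)) := Real.rpow_le_rpow (by positivity) hpowle (by positivity)
      _ = b := rfl
  -- Step 3: conclude
  have hsr : spectralRadius ℂ H = ⨆ μ ∈ spectrum ℂ H, (‖μ‖₊ : ℝ≥0∞) := rfl
  have hle : spectralRadius ℂ H ≤ ENNReal.ofReal b := by
    rw [hsr]
    refine iSup₂_le fun μ hμ => ?_
    rw [← enorm_eq_nnnorm, ← ofReal_norm]
    exact ENNReal.ofReal_le_ofReal (hmain μ hμ)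
  exact lt_of_le_of_lt hle (by rwa [ENNReal.ofReal_lt_one])
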